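/- Consider n receivers, each receiver r having a knowledge subspace V_r ⊆ F_q^m, with q ≥ n. Let u_1 < u_2 < ... < u_k be the distinct oldest unseen indices of the receivers, where the oldest unseen index of receiver r is the smallest index not seen by V_r, and assume each receiver has seen all indices u_i smaller than its own oldest unseen index. Then there exist coefficients α_1, ..., α_k ∈ F_q such that the vector g = Σ_i α_i e_{u_i} has the property that for every receiver r, the space span(V_r ∪ {g}) sees the oldest unseen index of r. -/
import Mathlib


/-- A subspace `V` "sees" index `k` if some vector of `V` has its first nonzero
coordinate at position `k`. -/
def sees {F : Type*} [Field F] {m : ℕ} (V : Submodule F (Fin m → F)) (k : Fin m) : Prop :=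
  ∃ v ∈ V, v k ≠ 0 ∧ ∀ i, i < k → v i = 0

open Finset

section Alph
variable {F : Type*} [Field F] [Fintype F] [DecidableEq F] {n m : ℕ}

noncomputable def alph (c : Fin n → Fin m → F) (o : Fin n → Fin m) : ℕ → F
  | t =>
    if _ : ∃ r, ((o r : ℕ) = t) then
      if hs : ((univ.filter (fun r => ((o r : ℕ) = t))).image
          (fun r => -∑ u ∈ univ.filter (fun u : Fin m => (u : ℕ) < t),
            (if h' : (u : ℕ) < t then alph c o u else 0) * c r u))ᶜ.Nonempty then
        hs.choose
      else 0
    else 0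
  termination_by t => t
  decreasing_by all_goals exact h'

noncomputable def forb (c : Fin n → Fin m → F) (o : Fin n → Fin m) (t : ℕ) : Finset F :=
  (univ.filter (fun r => ((o r : ℕ) = t))).image
    (fun r => -∑ u ∈ univ.filter (fun u : Fin m => (u : ℕ) < t), alph c o u * c r u)

lemma alph_eq (c : Fin n → Fin m → F) (o : Fin n → Fin m) (t : ℕ) :
    alph c o t =
      if _ : ∃ r, ((o r : ℕ) = t) then
        (if hs : (forb c o t)ᶜ.Nonempty then hs.choose else 0)
      else 0 := by
  rw [alph]
  have hset : ((univ.filter (fun r => ((o r : ℕ) = t))).image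
      (fun r => -∑ u ∈ univ.filter (fun u : Fin m => (u : ℕ) < t),
        (if h' : (u : ℕ) < t then alph c o u else 0) * c r u)) = forb c o t := by
    unfold forb
    congr 1
    funext r
    congr 1
    refine Finset.sum_congr rfl fun u hu => ?_
    rw [dif_pos (mem_filter.mp hu).2]
  rw [hset]

lemma alph_support (c : Fin n → Fin m → F) (o : Fin n → Fin m) (t : ℕ)
    (h : alph c o t ≠ 0) : ∃ r, ((o r : ℕ) = t) := by
  by_contra hc
  rw [alph_eq, dif_neg hc] at h
  exact h rfl

lemma alph_good (hq : n ≤ Fintype.card F) (c : Fin n → Fin m → F) (o : Fin n → Fin m)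
    (hc1 : ∀ r, c r (o r) = 1) (hc0 : ∀ r u, o r < u → c r u = 0) (r : Fin n) :
    ∑ u : Fin m, alph c o (u : ℕ) * c r u ≠ 0 := by
  set t : ℕ := (o r : ℕ) with ht
  have hex : ∃ r', ((o r' : ℕ) = t) := ⟨r, rfl⟩
  have hcard : (forb c o t).card < Fintype.card F := by
    by_cases hall : ∀ r', o r' = o r
    · have hsub : forb c o t ⊆ {0} := by
        intro x hx
        simp only [forb, mem_image] at hx
        obtain ⟨r'', -, hx⟩ := hx
        have hz : ∀ u ∈ univ.filter (fun u : Fin m => (u : ℕ) < t),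
            alph c o (u : ℕ) * c r'' u = 0 := by
          intro u hu
          have hu' := (mem_filter.mp hu).2
          have h0 : alph c o (u : ℕ) = 0 := by
            by_contra h0
            obtain ⟨r3, hr3⟩ := alph_support c o (u : ℕ) h0
            rw [hall r3] at hr3
            omega
          rw [h0, zero_mul]
        rw [Finset.sum_eq_zero hz, neg_zero] at hx
        simp [← hx]
      calc (forb c o t).card ≤ ({0} : Finset F).card := Finset.card_le_card hsub
        _ ≤ 1 := by simp
        _ < Fintype.card F := Fintype.one_lt_card
    · push_neg at hall
      obtain ⟨r', hr'⟩ := hall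
      have hsub : (univ.filter (fun r'' => ((o r'' : ℕ) = t))) ⊆ univ.erase r' := by
        intro x hx
        simp only [mem_filter, mem_univ, true_and] at hx
        refine Finset.mem_erase.mpr ⟨?_, Finset.mem_univ _⟩
        rintro rfl
        exact hr' (Fin.val_injective hx)
      have h1 : (forb c o t).card ≤ (univ.filter (fun r'' => ((o r'' : ℕ) = t))).card :=
        Finset.card_image_le
      have h2 := Finset.card_le_card hsub
      have h3 : (univ.erase r' : Finset (Fin n)).card = n - 1 := by
        rw [Finset.card_erase_of_mem (Finset.mem_univ _)]
        simp
      have hn : 1 ≤ n := Nat.one_le_iff_ne_zero.mpr (by rintro rfl; exact r.elim0)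
      omega
  have hne : ((forb c o t)ᶜ).Nonempty := by
    rw [← Finset.card_pos, Finset.card_compl]
    omega
  have hmem : alph c o t ∉ forb c o t := by
    rw [alph_eq, dif_pos hex, dif_pos hne]
    have := hne.choose_spec
    simpa using this
  have hforb : -∑ u ∈ univ.filter (fun u : Fin m => (u : ℕ) < t), alph c o (u : ℕ) * c r u
      ∈ forb c o t := Finset.mem_image_of_mem _ (by simp [ht])
  have hsum : ∑ u : Fin m, alph c o (u : ℕ) * c r u
      = (∑ u ∈ univ.filter (fun u : Fin m => (u : ℕ) < t), alph c o (u : ℕ) * c r u)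
        + alph c o t := by
    rw [← Finset.sum_filter_add_sum_filter_not univ (fun u : Fin m => (u : ℕ) < t)]
    congr 1
    rw [Finset.sum_eq_single_of_mem (o r)]
    · rw [hc1 r, mul_one]
    · simp [ht]
    · intro u hu hune
      simp only [mem_filter, mem_univ, true_and, not_lt] at hu
      have : o r < u := by
        rcases lt_or_eq_of_le hu with h | h
        · exact h
        · exact absurd (Fin.val_injective h.symm) hune
      rw [hc0 r u this, mul_zero]
  rw [hsum]
  intro hcon
  apply hmem
  have : alph c o t = -∑ u ∈ univ.filter (fun u : Fin m => (u : ℕ) < t),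
      alph c o (u : ℕ) * c r u := by linear_combination hcon
  rw [this]
  exact hforb

end Alph

lemma reduce {F : Type*} [Field F] {m : ℕ} (V : Submodule F (Fin m → F)) (k : Fin m)
    (hseen : ∀ j : Fin m, j < k → sees V j) (x : Fin m → F) :
    ∃ v ∈ V, ∀ i, i < k → (x - v) i = 0 := by
  have key : ∀ t : ℕ, ∃ v ∈ V, ∀ i : Fin m, i < k → (i : ℕ) < t → (x - v) i = 0 := by
    intro t
    induction t with
    | zero => exact ⟨0, V.zero_mem, fun i _ h => absurd h (Nat.not_lt_zero _)⟩
    | succ t ih =>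
      obtain ⟨v, hv, hvi⟩ := ih
      by_cases ht : ∃ i : Fin m, (i : ℕ) = t ∧ i < k
      · obtain ⟨i, hit, hik⟩ := ht
        obtain ⟨w, hw, hwi, hwj⟩ := hseen i hik
        refine ⟨v + ((x - v) i / w i) • w, V.add_mem hv (V.smul_mem _ hw), ?_⟩
        intro j hjk hjt
        have hval : (x - (v + ((x - v) i / w i) • w)) j
            = (x - v) j - ((x - v) i / w i) * w j := by
          simp [sub_add_eq_sub_sub]
        rcases Nat.lt_or_ge (j : ℕ) t with h | h
        · rw [hval, hvi j hjk h, hwj j (by rw [Fin.lt_def]; omega), mul_zero, zero_sub, neg_zero]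
        · have hji : j = i := Fin.ext (by omega)
          subst hji
          rw [hval, div_mul_cancel₀ _ hwi, sub_self]
      · refine ⟨v, hv, fun j hjk hjt => hvi j hjk ?_⟩
        rcases Nat.lt_or_ge (j : ℕ) t with h | h
        · exact h
        · exact absurd ⟨j, by omega, hjk⟩ ht
  obtain ⟨v, hv, hvi⟩ := key m
  exact ⟨v, hv, fun i hik => hvi i hik i.isLt⟩

/-- **Correctness of the coding module.**  With `n` receivers having knowledge spaces
`V r ⊆ F_q^m` (`q ≥ n`), where `oldest r` is the oldest unseen index of receiver `r`
(unseen, and all smaller indices are seen), there is a vector `g` supported only on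
the oldest unseen indices such that adjoining `g` makes every receiver see its
oldest unseen index. -/
theorem stmt_5 {F : Type*} [Field F] [Fintype F] {n m : ℕ}
    (hq : n ≤ Fintype.card F)
    (V : Fin n → Submodule F (Fin m → F)) (oldest : Fin n → Fin m)
    (hunseen : ∀ r, ¬ sees (V r) (oldest r))
    (hseen : ∀ r, ∀ j : Fin m, j < oldest r → sees (V r) j) :
    ∃ g : Fin m → F,
      (∀ j : Fin m, g j ≠ 0 → ∃ r, oldest r = j) ∧
      (∀ r, sees (V r ⊔ Submodule.span F {g}) (oldest r)) := by
  classical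
  set e : Fin m → Fin m → F := fun u i => if i = u then 1 else 0 with he
  have hred : ∀ r (u : Fin m), ∃ v ∈ V r, ∀ i, i < oldest r → (e u - v) i = 0 :=
    fun r u => reduce (V r) (oldest r) (hseen r) (e u)
  choose v hvV hvz using hred
  have hB : ∀ r, ∀ w ∈ V r, (∀ i, i < oldest r → w i = 0) → w (oldest r) = 0 := by
    intro r w hw hwz
    by_contra h0
    exact hunseen r ⟨w, hw, h0, hwz⟩
  set c : Fin n → Fin m → F := fun r u => (e u - v r u) (oldest r) with hc
  have hvzero : ∀ r u, oldest r ≤ u → v r u (oldest r) = 0 := by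
    intro r u hu
    refine hB r _ (hvV r u) fun i hi => ?_
    have h1 := hvz r u i hi
    have h2 : e u i = 0 := by
      simp only [he, if_neg (show i ≠ u from fun h => absurd (h ▸ hu) (not_le_of_gt hi))]
    simpa [h2, sub_eq_zero] using h1.symm
  have hc1 : ∀ r, c r (oldest r) = 1 := by
    intro r
    simp [hc, he, hvzero r (oldest r) le_rfl]
  have hc0 : ∀ r u, oldest r < u → c r u = 0 := by
    intro r u hu
    simp [hc, he, hvzero r u hu.le, ne_of_lt hu]
  set g : Fin m → F := fun j => alph c oldest (j : ℕ) with hg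
  refine ⟨g, ?_, ?_⟩
  · intro j hj
    obtain ⟨r, hr⟩ := alph_support c oldest (j : ℕ) hj
    exact ⟨r, Fin.ext hr⟩
  · intro r
    set w : Fin m → F := g - ∑ u : Fin m, g u • v r u with hw
    have hwval : ∀ i, w i = ∑ u : Fin m, g u * (e u - v r u) i := by
      intro i
      have hgi : ∑ u : Fin m, g u * e u i = g i := by
        rw [Finset.sum_eq_single i]
        · simp [he]
        · intro u _ hu
          simp [he, Ne.symm hu]
        · simp
      calc w i = g i - ∑ u : Fin m, g u * v r u i := by
            simp [hw, Finset.sum_apply]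
        _ = ∑ u : Fin m, g u * (e u - v r u) i := by
            rw [← hgi]
            rw [← Finset.sum_sub_distrib]
            exact Finset.sum_congr rfl fun u _ => by ring_nf; simp [mul_sub]
    refine ⟨w, ?_, ?_, ?_⟩
    · refine Submodule.sub_mem _ ?_ ?_
      · exact Submodule.mem_sup_right (Submodule.mem_span_singleton_self g)
      · exact Submodule.mem_sup_left (Submodule.sum_mem _ fun u _ =>
          Submodule.smul_mem _ _ (hvV r u))
    · rw [hwval]
      have : ∀ u : Fin m, g u * (e u - v r u) (oldest r) = alph c oldest (u : ℕ) * c r u :=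
        fun u => rfl
      simp only [this]
      exact alph_good hq c oldest hc1 hc0 r
    · intro i hi
      rw [hwval]
      exact Finset.sum_eq_zero fun u _ => by rw [hvz r u i hi, mul_zero]
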